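/- Let G be a graph with a vertex v of degree three with neighbors a, b, c. For S a subset of {a,b,c}, let G_S denote the graph obtained by subdividing each edge from v to a vertex in S. Then LO_k(G) = LO_k(G_{ab}) + LO_k(G_{ac}) + LO_k(G_{bc}) − 2·LO_k(G_{abc}). -/
import Mathlib


/-- A locally-optimal `k`-coloring: each vertex's own color appears strictly
more often among its neighbors than any other color (plurality). -/
def IsLocOpt {V : Type*} {k : ℕ} (G : SimpleGraph V) (c : V → Fin k) : Prop :=
  ∀ v : V, ∀ d : Fin k, d ≠ c v →
    Nat.card {w : V // G.Adj v w ∧ c w = d} < Nat.card {w : V // G.Adj v w ∧ c w = c v}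

/-- The number of locally-optimal `k`-colorings of `G`. -/
noncomputable def LOcount {V : Type*} (G : SimpleGraph V) (k : ℕ) : ℕ :=
  Nat.card {c : V → Fin k // IsLocOpt G c}

/-- The graph obtained from `G` by subdividing the edge `uw`. -/
def subdiv {V : Type*} (G : SimpleGraph V) (u w : V) : SimpleGraph (V ⊕ Unit) :=
  SimpleGraph.fromRel fun x y =>
    match x, y with
    | Sum.inl a, Sum.inl b => G.Adj a b ∧ ¬((a = u ∧ b = w) ∨ (a = w ∧ b = u))
    | Sum.inl a, Sum.inr _ => a = u ∨ a = w
    | Sum.inr _, _ => False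

open Sum

section Aux
variable {V : Type*}

def equivOfMaps {α β : Type*} {p : α → Prop} {q : β → Prop} (f : α → β) (g : β → α)
    (hf : ∀ a, p a → q (f a)) (hg : ∀ b, q b → p (g b))
    (hgf : ∀ a, p a → g (f a) = a) (hfg : ∀ b, q b → f (g b) = b) :
    {a // p a} ≃ {b // q b} where
  toFun x := ⟨f x.1, hf x.1 x.2⟩
  invFun y := ⟨g y.1, hg y.1 y.2⟩
  left_inv x := Subtype.ext (hgf x.1 x.2)
  right_inv y := Subtype.ext (hfg y.1 y.2)

lemma card_le_one' {α : Type*} [Finite α] {p : α → Prop} (h : ∀ x y, p x → p y → x = y) :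
    Nat.card {x // p x} ≤ 1 := by
  have : Subsingleton {x // p x} := ⟨fun a b => Subtype.ext (h a.1 b.1 a.2 b.2)⟩
  exact Finite.card_le_one_iff_subsingleton.mpr this

lemma card_pos' {α : Type*} [Finite α] {p : α → Prop} {x : α} (hx : p x) :
    0 < Nat.card {z // p z} := by
  haveI : Nonempty {z // p z} := ⟨⟨x, hx⟩⟩
  exact Finite.card_pos

lemma card_zero' {α : Type*} {p : α → Prop} (h : ∀ x, ¬ p x) :
    Nat.card {z : α // p z} = 0 := by
  haveI : IsEmpty {z : α // p z} := ⟨fun z => h z.1 z.2⟩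
  exact Nat.card_of_isEmpty

lemma subdiv_adj_inl_inl {G : SimpleGraph V} {u w x y : V} :
    (subdiv G u w).Adj (inl x) (inl y) ↔
      G.Adj x y ∧ ¬((x = u ∧ y = w) ∨ (x = w ∧ y = u)) := by
  simp only [subdiv, SimpleGraph.fromRel_adj]
  constructor
  · rintro ⟨hne, h | h⟩
    · exact h
    · exact ⟨h.1.symm, fun hp => h.2 (by tauto)⟩
  · rintro ⟨hadj, hp⟩
    exact ⟨by simp [hadj.ne], Or.inl ⟨hadj, hp⟩⟩

lemma subdiv_adj_inl_inr {G : SimpleGraph V} {u w x : V} {t : Unit} :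
    (subdiv G u w).Adj (inl x) (inr t) ↔ x = u ∨ x = w := by
  simp only [subdiv, SimpleGraph.fromRel_adj]
  constructor
  · rintro ⟨hne, h | h⟩
    · exact h
    · exact h.elim
  · rintro h
    exact ⟨by simp, Or.inl h⟩

lemma subdiv_adj_inr_inl {G : SimpleGraph V} {u w x : V} {t : Unit} :
    (subdiv G u w).Adj (inr t) (inl x) ↔ x = u ∨ x = w := by
  rw [SimpleGraph.adj_comm]; exact subdiv_adj_inl_inr

lemma subdiv_adj_inr_inr {G : SimpleGraph V} {u w : V} {t s : Unit} :
    ¬ (subdiv G u w).Adj (inr t) (inr s) := by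
  simp only [subdiv, SimpleGraph.fromRel_adj]
  rintro ⟨hne, h | h⟩ <;> exact h

end Aux

section Main
variable {V : Type*} {k : ℕ}

lemma count_eq {G : SimpleGraph V} {u w : V} (h : G.Adj u w)
    (f : V → Fin k) (huw : f w = f u) (x : V) (d : Fin k) :
    Nat.card {y : V ⊕ Unit // (subdiv G u w).Adj (inl x) y ∧ Sum.elim f (fun _ => f u) y = d}
      = Nat.card {y : V // G.Adj x y ∧ f y = d} := by
  have hne : u ≠ w := h.ne
  classical
  by_cases hxu : x = u
  · subst hxu
    apply Nat.card_congr
    refine equivOfMaps (Sum.elim id fun _ => w)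
      (fun z => if z = w then inr () else inl z) ?_ ?_ ?_ ?_
    · rintro (z | t) ⟨ha, hc⟩
      · rw [subdiv_adj_inl_inl] at ha
        exact ⟨ha.1, hc⟩
      · simp only [Sum.elim_inr] at hc
        exact ⟨h, huw.trans hc⟩
    · rintro z ⟨ha, hc⟩
      by_cases hz : z = w
      · subst hz
        simp only [if_pos rfl, Sum.elim_inr]
        exact ⟨subdiv_adj_inl_inr.mpr (Or.inl rfl), huw ▸ hc⟩
      · simp only [if_neg hz, Sum.elim_inl]
        refine ⟨subdiv_adj_inl_inl.mpr ⟨ha, ?_⟩, hc⟩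
        rintro (⟨-, h2⟩ | ⟨h1, -⟩)
        · exact hz h2
        · exact hne h1
    · rintro (z | t) ⟨ha, hc⟩
      · rw [subdiv_adj_inl_inl] at ha
        have hz : z ≠ w := fun hzw => ha.2 (Or.inl ⟨rfl, hzw⟩)
        simp [hz]
      · cases t; simp
    · rintro z ⟨ha, hc⟩
      by_cases hz : z = w <;> simp [hz]
  · by_cases hxw : x = w
    · subst hxw
      apply Nat.card_congr
      refine equivOfMaps (Sum.elim id fun _ => u)
        (fun z => if z = u then inr () else inl z) ?_ ?_ ?_ ?_
      · rintro (z | t) ⟨ha, hc⟩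
        · rw [subdiv_adj_inl_inl] at ha
          exact ⟨ha.1, hc⟩
        · simp only [Sum.elim_inr] at hc
          exact ⟨h.symm, hc⟩
      · rintro z ⟨ha, hc⟩
        by_cases hz : z = u
        · subst hz
          simp only [if_pos rfl, Sum.elim_inr]
          exact ⟨subdiv_adj_inl_inr.mpr (Or.inr rfl), hc⟩
        · simp only [if_neg hz, Sum.elim_inl]
          refine ⟨subdiv_adj_inl_inl.mpr ⟨ha, ?_⟩, hc⟩
          rintro (⟨h1, -⟩ | ⟨-, h2⟩)
          · exact hne h1.symm
          · exact hz h2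
      · rintro (z | t) ⟨ha, hc⟩
        · rw [subdiv_adj_inl_inl] at ha
          have hz : z ≠ u := fun hzu => ha.2 (Or.inr ⟨rfl, hzu⟩)
          simp [hz]
        · cases t; simp
      · rintro z ⟨ha, hc⟩
        by_cases hz : z = u <;> simp [hz]
    · apply Nat.card_congr
      refine equivOfMaps (Sum.elim id fun _ => x) inl ?_ ?_ ?_ ?_
      · rintro (z | t) ⟨ha, hc⟩
        · rw [subdiv_adj_inl_inl] at ha
          exact ⟨ha.1, hc⟩
        · rw [subdiv_adj_inl_inr] at ha
          exact absurd ha (by tauto)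
      · rintro z ⟨ha, hc⟩
        refine ⟨subdiv_adj_inl_inl.mpr ⟨ha, ?_⟩, hc⟩
        rintro (⟨h1, -⟩ | ⟨h1, -⟩)
        · exact hxu h1
        · exact hxw h1
      · rintro (z | t) ⟨ha, hc⟩
        · rfl
        · rw [subdiv_adj_inl_inr] at ha
          exact absurd ha (by tauto)
      · rintro z _; rfl

lemma forced [Finite V] {G : SimpleGraph V} {u w : V} (h : G.Adj u w)
    (f2 : V ⊕ Unit → Fin k) (hf2 : IsLocOpt (subdiv G u w) f2) :
    f2 (inl u) = f2 (inr ()) ∧ f2 (inl w) = f2 (inr ()) := by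
  have hne : u ≠ w := h.ne
  have haux : ∀ z z' : V, (z = u ∧ z' = w) ∨ (z = w ∧ z' = u) →
      f2 (inl z) ≠ f2 (inr ()) → False := by
    rintro z z' hzz' hzne
    have hcond := hf2 (inr ()) (f2 (inl z)) hzne
    have hmem : ∀ y : V ⊕ Unit,
        ((subdiv G u w).Adj (inr ()) y ∧ f2 y = f2 (inr ())) → y = inl z' := by
      rintro (s | t) ⟨hy1, hy2⟩
      · rw [subdiv_adj_inr_inl] at hy1
        have hsz : s ≠ z := fun hh => hzne (hh ▸ hy2)
        rcases hzz' with ⟨rfl, rfl⟩ | ⟨rfl, rfl⟩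
        · rcases hy1 with rfl | rfl
          · exact absurd rfl hsz
          · rfl
        · rcases hy1 with rfl | rfl
          · rfl
          · exact absurd rfl hsz
      · exact absurd hy1 subdiv_adj_inr_inr
    have h1 : Nat.card {y // (subdiv G u w).Adj (inr ()) y ∧ f2 y = f2 (inr ())} ≤ 1 :=
      card_le_one' (fun a b hpa hpb => (hmem a hpa).trans (hmem b hpb).symm)
    have h2 : 0 < Nat.card {y // (subdiv G u w).Adj (inr ()) y ∧ f2 y = f2 (inl z)} :=
      card_pos' ⟨subdiv_adj_inr_inl.mpr (by tauto), rfl⟩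
    linarith
  constructor
  · by_contra hcon
    exact haux u w (Or.inl ⟨rfl, rfl⟩) hcon
  · by_contra hcon
    exact haux w u (Or.inr ⟨rfl, rfl⟩) hcon

lemma extend_lo [Finite V] {G : SimpleGraph V} {u w : V} (h : G.Adj u w)
    (f : V → Fin k) (hf : IsLocOpt G f) (huw : f w = f u) :
    IsLocOpt (subdiv G u w) (Sum.elim f fun _ => f u) := by
  rintro (x | t) d hd
  · simp only [Sum.elim_inl] at hd ⊢
    rw [count_eq h f huw x d, count_eq h f huw x (f x)]
    exact hf x d hd
  · cases t
    simp only [Sum.elim_inr] at hd ⊢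
    have e0 : Nat.card
        {y : V ⊕ Unit // (subdiv G u w).Adj (inr ()) y ∧ Sum.elim f (fun _ => f u) y = d} = 0 := by
      apply card_zero'
      rintro (z | t) ⟨hy1, hy2⟩
      · rw [subdiv_adj_inr_inl] at hy1
        simp only [Sum.elim_inl] at hy2
        rcases hy1 with rfl | rfl
        · exact hd hy2.symm
        · exact hd (huw ▸ hy2).symm
      · exact subdiv_adj_inr_inr hy1
    have e1 : 0 < Nat.card
        {y : V ⊕ Unit // (subdiv G u w).Adj (inr ()) y ∧ Sum.elim f (fun _ => f u) y = f u} :=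
      card_pos' (x := inl u) ⟨subdiv_adj_inr_inl.mpr (Or.inl rfl), rfl⟩
    rw [e0]
    exact e1

lemma restrict_lo [Finite V] {G : SimpleGraph V} {u w : V} (h : G.Adj u w)
    (f2 : V ⊕ Unit → Fin k) (hf2 : IsLocOpt (subdiv G u w) f2) :
    IsLocOpt G (f2 ∘ inl) ∧ (f2 ∘ inl) w = (f2 ∘ inl) u := by
  obtain ⟨h1, h2⟩ := forced h f2 hf2
  have huw : (f2 ∘ inl) w = (f2 ∘ inl) u := h2.trans h1.symm
  have hfe : f2 = Sum.elim (f2 ∘ inl) (fun _ => (f2 ∘ inl) u) := by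
    funext y
    rcases y with z | t
    · rfl
    · cases t; exact h1.symm
  refine ⟨?_, huw⟩
  intro x d hd
  have hc := hf2 (inl x) d hd
  rw [hfe] at hc
  simp only [Sum.elim_inl] at hc
  rw [count_eq h (f2 ∘ inl) huw x d, count_eq h (f2 ∘ inl) huw x ((f2 ∘ inl) x)] at hc
  exact hc

lemma card_subdiv [Finite V] {G : SimpleGraph V} {u w : V} (h : G.Adj u w)
    (P : (V → Fin k) → Prop) :
    Nat.card {f2 : V ⊕ Unit → Fin k // IsLocOpt (subdiv G u w) f2 ∧ P (f2 ∘ inl)}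
      = Nat.card {f : V → Fin k // (IsLocOpt G f ∧ f w = f u) ∧ P f} := by
  apply Nat.card_congr
  refine equivOfMaps (fun f2 => f2 ∘ inl) (fun f => Sum.elim f fun _ => f u) ?_ ?_ ?_ ?_
  · rintro f2 ⟨hlo, hP⟩
    exact ⟨restrict_lo h f2 hlo, hP⟩
  · rintro f ⟨⟨hlo, huw⟩, hP⟩
    refine ⟨extend_lo h f hlo huw, ?_⟩
    rw [Sum.elim_comp_inl]
    exact hP
  · rintro f2 ⟨hlo, hP⟩
    funext y
    rcases y with z | t
    · rfl
    · cases t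
      exact (forced h f2 hlo).1
  · rintro f _
    exact Sum.elim_comp_inl _ _

lemma card_subdiv0 [Finite V] {G : SimpleGraph V} {u w : V} (h : G.Adj u w) :
    LOcount (subdiv G u w) k
      = Nat.card {f : V → Fin k // IsLocOpt G f ∧ f w = f u} :=
  calc LOcount (subdiv G u w) k
      = Nat.card {f2 : V ⊕ Unit → Fin k //
          IsLocOpt (subdiv G u w) f2 ∧ (fun _ : V → Fin k => True) (f2 ∘ inl)} :=
        Nat.card_congr (Equiv.subtypeEquivRight (by simp))
    _ = Nat.card {f : V → Fin k //
          (IsLocOpt G f ∧ f w = f u) ∧ (fun _ : V → Fin k => True) f} := card_subdiv h (fun _ => True)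
    _ = Nat.card {f : V → Fin k // IsLocOpt G f ∧ f w = f u} :=
        Nat.card_congr (Equiv.subtypeEquivRight (by tauto))

lemma adj_sub1 {G : SimpleGraph V} {v p q : V} (hp : G.Adj v p) (hq : G.Adj v q)
    (hpq : p ≠ q) : (subdiv G v p).Adj (inl v) (inl q) := by
  rw [subdiv_adj_inl_inl]
  refine ⟨hq, ?_⟩
  rintro (⟨-, h2⟩ | ⟨h1, -⟩)
  · exact hpq h2.symm
  · exact hp.ne' h1.symm

lemma pair_count [Finite V] {G : SimpleGraph V} {v p q : V}
    (hp : G.Adj v p) (hq : G.Adj v q) (hpq : p ≠ q) :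
    LOcount (subdiv (subdiv G v p) (inl v) (inl q)) k
      = Nat.card {f : V → Fin k // IsLocOpt G f ∧ f p = f v ∧ f q = f v} :=
  calc LOcount (subdiv (subdiv G v p) (inl v) (inl q)) k
      = Nat.card {f1 : (V ⊕ Unit) → Fin k //
          IsLocOpt (subdiv G v p) f1 ∧ f1 (inl q) = f1 (inl v)} :=
        card_subdiv0 (adj_sub1 hp hq hpq)
    _ = Nat.card {f1 : (V ⊕ Unit) → Fin k //
          IsLocOpt (subdiv G v p) f1 ∧ (fun g : V → Fin k => g q = g v) (f1 ∘ inl)} :=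
        Nat.card_congr (Equiv.subtypeEquivRight (fun f1 => Iff.rfl))
    _ = Nat.card {f : V → Fin k //
          (IsLocOpt G f ∧ f p = f v) ∧ (fun g : V → Fin k => g q = g v) f} :=
        card_subdiv hp (fun g => g q = g v)
    _ = Nat.card {f : V → Fin k // IsLocOpt G f ∧ f p = f v ∧ f q = f v} :=
        Nat.card_congr (Equiv.subtypeEquivRight (fun f => by tauto))

lemma triple_count [Finite V] {G : SimpleGraph V} {v p q r : V}
    (hp : G.Adj v p) (hq : G.Adj v q) (hr : G.Adj v r)
    (hpq : p ≠ q) (hpr : p ≠ r) (hqr : q ≠ r) :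
    LOcount (subdiv (subdiv (subdiv G v p) (inl v) (inl q))
        (inl (inl v)) (inl (inl r))) k
      = Nat.card {f : V → Fin k //
          IsLocOpt G f ∧ f p = f v ∧ f q = f v ∧ f r = f v} := by
  have hadj1 : (subdiv G v p).Adj (inl v) (inl r) := adj_sub1 hp hr hpr
  have hadj2 : (subdiv (subdiv G v p) (inl v) (inl q)).Adj (inl (inl v)) (inl (inl r)) := by
    rw [subdiv_adj_inl_inl]
    refine ⟨hadj1, ?_⟩
    rintro (⟨-, h2⟩ | ⟨h1, -⟩)
    · exact hqr (Sum.inl.inj h2).symm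
    · exact hq.ne (Sum.inl.inj h1)
  calc LOcount (subdiv (subdiv (subdiv G v p) (inl v) (inl q))
          (inl (inl v)) (inl (inl r))) k
      = Nat.card {f2 : ((V ⊕ Unit) ⊕ Unit) → Fin k //
          IsLocOpt (subdiv (subdiv G v p) (inl v) (inl q)) f2 ∧
            f2 (inl (inl r)) = f2 (inl (inl v))} :=
        card_subdiv0 hadj2
    _ = Nat.card {f2 : ((V ⊕ Unit) ⊕ Unit) → Fin k //
          IsLocOpt (subdiv (subdiv G v p) (inl v) (inl q)) f2 ∧
            (fun g : (V ⊕ Unit) → Fin k => g (inl r) = g (inl v)) (f2 ∘ inl)} :=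
        Nat.card_congr (Equiv.subtypeEquivRight (fun f2 => Iff.rfl))
    _ = Nat.card {f1 : (V ⊕ Unit) → Fin k //
          (IsLocOpt (subdiv G v p) f1 ∧ f1 (inl q) = f1 (inl v)) ∧
            (fun g : (V ⊕ Unit) → Fin k => g (inl r) = g (inl v)) f1} :=
        card_subdiv (adj_sub1 hp hq hpq) (fun g => g (inl r) = g (inl v))
    _ = Nat.card {f1 : (V ⊕ Unit) → Fin k //
          IsLocOpt (subdiv G v p) f1 ∧
            (fun g : V → Fin k => g q = g v ∧ g r = g v) (f1 ∘ inl)} :=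
        Nat.card_congr (Equiv.subtypeEquivRight (fun f1 => by tauto))
    _ = Nat.card {f : V → Fin k //
          (IsLocOpt G f ∧ f p = f v) ∧ (fun g : V → Fin k => g q = g v ∧ g r = g v) f} :=
        card_subdiv hp (fun g => g q = g v ∧ g r = g v)
    _ = Nat.card {f : V → Fin k //
          IsLocOpt G f ∧ f p = f v ∧ f q = f v ∧ f r = f v} :=
        Nat.card_congr (Equiv.subtypeEquivRight (fun f => by tauto))

lemma card_or_and {α : Type*} [Finite α] (p q : α → Prop) :
    Nat.card {x // p x ∨ q x} + Nat.card {x // p x ∧ q x}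
      = Nat.card {x // p x} + Nat.card {x // q x} := by
  have e1 : Nat.card {x // p x ∨ q x} = ({x | p x} ∪ {x | q x} : Set α).ncard := by
    rw [← Nat.card_coe_set_eq]
    exact Nat.card_congr (Equiv.subtypeEquivRight fun x => Iff.rfl)
  have e2 : Nat.card {x // p x ∧ q x} = ({x | p x} ∩ {x | q x} : Set α).ncard := by
    rw [← Nat.card_coe_set_eq]
    exact Nat.card_congr (Equiv.subtypeEquivRight fun x => Iff.rfl)
  have e3 : Nat.card {x // p x} = ({x | p x} : Set α).ncard := by
    rw [← Nat.card_coe_set_eq]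
    exact Nat.card_congr (Equiv.subtypeEquivRight fun x => Iff.rfl)
  have e4 : Nat.card {x // q x} = ({x | q x} : Set α).ncard := by
    rw [← Nat.card_coe_set_eq]
    exact Nat.card_congr (Equiv.subtypeEquivRight fun x => Iff.rfl)
  rw [e1, e2, e3, e4]
  exact Set.ncard_union_add_ncard_inter _ _ (Set.toFinite _) (Set.toFinite _)

end Main

/-- The trivalent recurrence: if `v` has degree three with neighbors `a,b,c`,
then `LO_k(G) = LO_k(G_ab) + LO_k(G_ac) + LO_k(G_bc) - 2 LO_k(G_abc)`, where
`G_S` is obtained by subdividing the edges from `v` to `S`. (Stated additively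
to avoid truncated subtraction.) -/
theorem stmt7 {V : Type*} [Fintype V] (G : SimpleGraph V) (k : ℕ) (v a b c : V)
    (hab : a ≠ b) (hac : a ≠ c) (hbc : b ≠ c)
    (ha : G.Adj v a) (hb : G.Adj v b) (hc : G.Adj v c)
    (hdeg : Nat.card {w : V // G.Adj v w} = 3) :
    LOcount G k
      + 2 * LOcount (subdiv (subdiv (subdiv G v a) (Sum.inl v) (Sum.inl b))
          (Sum.inl (Sum.inl v)) (Sum.inl (Sum.inl c))) k
      = LOcount (subdiv (subdiv G v a) (Sum.inl v) (Sum.inl b)) k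
        + LOcount (subdiv (subdiv G v a) (Sum.inl v) (Sum.inl c)) k
        + LOcount (subdiv (subdiv G v b) (Sum.inl v) (Sum.inl c)) k := by
  classical
  rw [pair_count ha hb hab, pair_count ha hc hac, pair_count hb hc hbc,
    triple_count ha hb hc hab hac hbc]
  have hnbr : ∀ x, G.Adj v x → x = a ∨ x = b ∨ x = c := by
    intro x hx
    have hN : (Finset.univ.filter (fun y => G.Adj v y)).card = 3 := by
      rw [← Fintype.card_subtype, ← Nat.card_eq_fintype_card]
      exact hdeg
    have hsub : ({a, b, c} : Finset V) ⊆ Finset.univ.filter (fun y => G.Adj v y) := by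
      intro y hy
      simp only [Finset.mem_insert, Finset.mem_singleton] at hy
      simp only [Finset.mem_filter, Finset.mem_univ, true_and]
      rcases hy with rfl | rfl | rfl
      exacts [ha, hb, hc]
    have hcard3 : ({a, b, c} : Finset V).card = 3 := by
      rw [Finset.card_insert_of_notMem (by simp [hab, hac]),
        Finset.card_insert_of_notMem (by simp [hbc]), Finset.card_singleton]
    have heq := Finset.eq_of_subset_of_card_le hsub (by rw [hN, hcard3])
    have hmem : x ∈ ({a, b, c} : Finset V) := by
      rw [heq]
      simp [hx]
    simpa using hmem
  have key : ∀ (f : V → Fin k) (x y : V), x ≠ y → G.Adj v x → G.Adj v y →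
      f x ≠ f v → f y ≠ f v → ¬ IsLocOpt G f := by
    intro f x y hxy hvx hvy hfx hfy hlo
    have hcv : Nat.card {z // G.Adj v z ∧ f z = f v} ≤ 1 := by
      apply card_le_one'
      rintro s t ⟨hs1, hs2⟩ ⟨ht1, ht2⟩
      have hsx : s ≠ x := fun hh => hfx (hh ▸ hs2)
      have hsy : s ≠ y := fun hh => hfy (hh ▸ hs2)
      have htx : t ≠ x := fun hh => hfx (hh ▸ ht2)
      have hty : t ≠ y := fun hh => hfy (hh ▸ ht2)
      rcases hnbr x hvx with rfl | rfl | rfl <;>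
        rcases hnbr y hvy with rfl | rfl | rfl <;>
        rcases hnbr s hs1 with rfl | rfl | rfl <;>
        rcases hnbr t ht1 with rfl | rfl | rfl <;>
        simp_all
    have hd1 : 0 < Nat.card {z // G.Adj v z ∧ f z = f x} := card_pos' ⟨hvx, rfl⟩
    have hlt := hlo v (f x) hfx
    linarith
  have h23 : ∀ f : V → Fin k, IsLocOpt G f →
      (f a = f v ∧ f b = f v) ∨ (f a = f v ∧ f c = f v) ∨ (f b = f v ∧ f c = f v) := by
    intro f hf
    by_cases hA : f a = f v
    · by_cases hB : f b = f v
      · exact Or.inl ⟨hA, hB⟩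
      · by_cases hC : f c = f v
        · exact Or.inr (Or.inl ⟨hA, hC⟩)
        · exact absurd hf (key f b c hbc hb hc hB hC)
    · by_cases hB : f b = f v
      · by_cases hC : f c = f v
        · exact Or.inr (Or.inr ⟨hB, hC⟩)
        · exact absurd hf (key f a c hac ha hc hA hC)
      · exact absurd hf (key f a b hab ha hb hA hB)
  unfold LOcount
  have hUeq : Nat.card {f : V → Fin k // IsLocOpt G f}
      = Nat.card {f : V → Fin k //
          ((IsLocOpt G f ∧ f a = f v ∧ f b = f v) ∨ (IsLocOpt G f ∧ f a = f v ∧ f c = f v))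
            ∨ (IsLocOpt G f ∧ f b = f v ∧ f c = f v)} :=
    Nat.card_congr (Equiv.subtypeEquivRight (fun f => by
      constructor
      · intro hf
        rcases h23 f hf with h | h | h <;> tauto
      · rintro ((⟨h, -⟩ | ⟨h, -⟩) | ⟨h, -⟩) <;> exact h))
  have t1 : Nat.card {f : V → Fin k //
        (IsLocOpt G f ∧ f a = f v ∧ f b = f v) ∨ (IsLocOpt G f ∧ f a = f v ∧ f c = f v)}
      + Nat.card {f : V → Fin k //
        (IsLocOpt G f ∧ f a = f v ∧ f b = f v) ∧ (IsLocOpt G f ∧ f a = f v ∧ f c = f v)}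
      = Nat.card {f : V → Fin k // IsLocOpt G f ∧ f a = f v ∧ f b = f v}
      + Nat.card {f : V → Fin k // IsLocOpt G f ∧ f a = f v ∧ f c = f v} :=
    card_or_and _ _
  have t2 : Nat.card {f : V → Fin k //
        ((IsLocOpt G f ∧ f a = f v ∧ f b = f v) ∨ (IsLocOpt G f ∧ f a = f v ∧ f c = f v))
          ∨ (IsLocOpt G f ∧ f b = f v ∧ f c = f v)}
      + Nat.card {f : V → Fin k //
        ((IsLocOpt G f ∧ f a = f v ∧ f b = f v) ∨ (IsLocOpt G f ∧ f a = f v ∧ f c = f v))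
          ∧ (IsLocOpt G f ∧ f b = f v ∧ f c = f v)}
      = Nat.card {f : V → Fin k //
        (IsLocOpt G f ∧ f a = f v ∧ f b = f v) ∨ (IsLocOpt G f ∧ f a = f v ∧ f c = f v)}
      + Nat.card {f : V → Fin k // IsLocOpt G f ∧ f b = f v ∧ f c = f v} :=
    card_or_and _ _
  have i1 : Nat.card {f : V → Fin k //
        (IsLocOpt G f ∧ f a = f v ∧ f b = f v) ∧ (IsLocOpt G f ∧ f a = f v ∧ f c = f v)}
      = Nat.card {f : V → Fin k //
        IsLocOpt G f ∧ f a = f v ∧ f b = f v ∧ f c = f v} :=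
    Nat.card_congr (Equiv.subtypeEquivRight (fun f => by tauto))
  have i2 : Nat.card {f : V → Fin k //
        ((IsLocOpt G f ∧ f a = f v ∧ f b = f v) ∨ (IsLocOpt G f ∧ f a = f v ∧ f c = f v))
          ∧ (IsLocOpt G f ∧ f b = f v ∧ f c = f v)}
      = Nat.card {f : V → Fin k //
        IsLocOpt G f ∧ f a = f v ∧ f b = f v ∧ f c = f v} :=
    Nat.card_congr (Equiv.subtypeEquivRight (fun f => by tauto))
  rw [i1] at t1
  rw [i2] at t2
  rw [hUeq]
  linarith
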